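/- Let m ≥ 2, ℓ ≥ 2, and let C_* be the quotient of OP_*(ℓ,m) by the image of φ(a₁,...,a_k) = (1,m-1,a₁,...,a_k). Then the map s: C_* → C_{*+1} given by s(a₁,...,a_k) = 0 if a₁=1, and s(a₁,...,a_k) = −(1, a₁−1, a₂,...,a_k) if a₁>1, satisfies sd + ds = Id; hence C_* is acyclic and φ is a quasi-isomorphism. -/

import Mathlib

open scoped Classical

/-- Basis of `OP_k(ℓ,m)`: ordered partitions of `ℓ` into `k` parts, all in `{1,...,m-1}`. -/
def OPb (ℓ : ℤ) (m k : ℕ) : Type :=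
  {l : List ℕ // l.length = k ∧ (l.sum : ℤ) = ℓ ∧ ∀ x ∈ l, 1 ≤ x ∧ x < m}

/-- The degree-`k` chain module of the complex of ordered partitions with upper bound. -/
abbrev OPMod (R : Type) [CommRing R] (ℓ : ℤ) (m k : ℕ) := OPb ℓ m k →₀ R

/-- The alternating sum of adjacent merges of a list, dropping merged entries `≥ m`. -/
noncomputable def dList (R : Type) [CommRing R] (m : ℕ) : List ℕ → (List ℕ →₀ R)
  | [] => 0
  | [_] => 0
  | a :: b :: t =>
      (if a + b < m then -Finsupp.single ((a + b) :: t) (1 : R) else 0)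
        - Finsupp.mapDomain (List.cons a) (dList R m (b :: t))

/-- Embedding of `OP_k(ℓ,m)` into the free module on all lists. -/
noncomputable def eL (R : Type) [CommRing R] (ℓ : ℤ) (m k : ℕ) :
    OPMod R ℓ m k →ₗ[R] (List ℕ →₀ R) :=
  Finsupp.lmapDomain R R Subtype.val

noncomputable def DL (R : Type) [CommRing R] (m : ℕ) : (List ℕ →₀ R) →ₗ[R] (List ℕ →₀ R) :=
  Finsupp.lsum R fun l => LinearMap.toSpanSingleton R _ (dList R m l)

noncomputable def rL (R : Type) [CommRing R] (ℓ : ℤ) (m k : ℕ) :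
    (List ℕ →₀ R) →ₗ[R] OPMod R ℓ m k :=
  Finsupp.lcomapDomain Subtype.val Subtype.val_injective

/-- The differential of the complex `OP_*(ℓ,m)`: merge adjacent entries with alternating
signs `(-1)^i`, dropping any term in which the merged entry is `≥ m`. -/
noncomputable def dOP (R : Type) [CommRing R] (ℓ : ℤ) (m k : ℕ) :
    OPMod R ℓ m (k + 1) →ₗ[R] OPMod R ℓ m k :=
  (rL R ℓ m k) ∘ₗ (DL R m) ∘ₗ (eL R ℓ m (k + 1))

/-- The outgoing differential from degree `k` (zero in degree `0`). -/
noncomputable def dOPOut (R : Type) [CommRing R] (ℓ : ℤ) (m : ℕ) :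
    (k : ℕ) → OPMod R ℓ m k →ₗ[R] OPMod R ℓ m (k - 1)
  | 0 => 0
  | (k + 1) => dOP R ℓ m k

/-- Homology of the complex `OP_*(ℓ,m)` in degree `k`. -/
noncomputable abbrev OPH (R : Type) [CommRing R] (ℓ : ℤ) (m k : ℕ) :=
  letI : HasQuotient (LinearMap.ker (dOPOut R ℓ m k))
      (Submodule R (LinearMap.ker (dOPOut R ℓ m k))) :=
    @Submodule.hasQuotient R (LinearMap.ker (dOPOut R ℓ m k)) _ (Submodule.addCommGroup _) _
  LinearMap.ker (dOPOut R ℓ m k) ⧸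
    (LinearMap.range (dOPOut R ℓ m (k + 1))).comap (LinearMap.ker (dOPOut R ℓ m k)).subtype

/-- The chain map `φ : OP_{*-2}(ℓ-m,m) → OP_*(ℓ,m)`, prepending `(1, m-1)`. -/
noncomputable def phiOP (R : Type) [CommRing R] (ℓ : ℤ) (m : ℕ) (hm : 2 ≤ m) (k : ℕ) :
    OPMod R (ℓ - m) m k →ₗ[R] OPMod R ℓ m (k + 2) :=
  Finsupp.lmapDomain R R fun b =>
    ⟨1 :: (m - 1) :: b.1, by
      obtain ⟨h1, h2, h3⟩ := b.2
      refine ⟨by simpa using h1, ?_, ?_⟩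
      · simp only [List.sum_cons]
        omega
      · intro y hy
        simp only [List.mem_cons] at hy
        rcases hy with rfl | rfl | hy
        · omega
        · omega
        · exact h3 y hy⟩

/-- The alternating list `(1, m-1, 1, m-1, ...)` with `2i` entries. -/
def altL (m : ℕ) : ℕ → List ℕ
  | 0 => []
  | i + 1 => 1 :: (m - 1) :: altL m i

/-- The alternating list `(m-1, 1, m-1, 1, ...)` with `2i` entries. -/
def altL' (m : ℕ) : ℕ → List ℕ
  | 0 => []
  | i + 1 => (m - 1) :: 1 :: altL' m i

/-- The submodule of `OP_k(ℓ,m)` by which we quotient to form the cokernel `C_*` of `φ`: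
the image of `φ` (trivial in degrees `0` and `1`). -/
noncomputable def Phi (R : Type) [CommRing R] (ℓ : ℤ) (m : ℕ) (hm : 2 ≤ m) :
    (k : ℕ) → Submodule R (OPMod R ℓ m k)
  | 0 => ⊥
  | 1 => ⊥
  | (k + 2) => LinearMap.range (phiOP R ℓ m hm k)


section Aux

variable (R : Type) [CommRing R] (m : ℕ)

/-- The homotopy on a single list. -/
noncomputable def sList : List ℕ → (List ℕ →₀ R)
  | [] => 0
  | a :: t => if a = 1 then 0 else -Finsupp.single (1 :: (a - 1) :: t) (1 : R)

noncomputable def SL : (List ℕ →₀ R) →ₗ[R] (List ℕ →₀ R) :=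
  Finsupp.lsum R fun l => LinearMap.toSpanSingleton R _ (sList R l)

/-- merge-first operator. -/
noncomputable def mAf (a : ℕ) : List ℕ → (List ℕ →₀ R)
  | [] => 0
  | b :: t => if a + b < m then -Finsupp.single ((a + b) :: t) (1 : R) else 0

noncomputable def mA (a : ℕ) : (List ℕ →₀ R) →ₗ[R] (List ℕ →₀ R) :=
  Finsupp.lsum R fun l => LinearMap.toSpanSingleton R _ (mAf R m a l)

@[simp] lemma DL_single (l : List ℕ) (r : R) :
    DL R m (Finsupp.single l r) = r • dList R m l := by
  simp [DL, Finsupp.lsum_single, LinearMap.toSpanSingleton_apply]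

@[simp] lemma SL_single (l : List ℕ) (r : R) :
    SL R (Finsupp.single l r) = r • sList R l := by
  simp [SL, Finsupp.lsum_single, LinearMap.toSpanSingleton_apply]

@[simp] lemma mA_single (a : ℕ) (l : List ℕ) (r : R) :
    mA R m a (Finsupp.single l r) = r • mAf R m a l := by
  simp [mA, Finsupp.lsum_single, LinearMap.toSpanSingleton_apply]

lemma L3 (a b : ℕ) (y : List ℕ →₀ R) :
    mA R m a (Finsupp.mapDomain (List.cons b) y)
      = if a + b < m then -(Finsupp.mapDomain (List.cons (a + b)) y) else 0 := by
  have : (mA R m a) ∘ₗ (Finsupp.lmapDomain R R (List.cons b))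
      = if a + b < m then -(Finsupp.lmapDomain R R (List.cons (a + b))) else 0 := by
    apply Finsupp.lhom_ext; intro l r
    split_ifs with h <;>
      simp [Finsupp.lmapDomain_apply, Finsupp.mapDomain_single, mAf, h, Finsupp.smul_single]
  have h2 := LinearMap.congr_fun this y
  simpa [Finsupp.lmapDomain_apply, apply_ite (fun (f : (List ℕ →₀ R) →ₗ[R] (List ℕ →₀ R)) => f y)]
    using h2

lemma L1 (a : ℕ) (y : List ℕ →₀ R) :
    DL R m (Finsupp.mapDomain (List.cons a) y)
      = mA R m a y - Finsupp.mapDomain (List.cons a) (DL R m y) := by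
  have : (DL R m) ∘ₗ (Finsupp.lmapDomain R R (List.cons a))
      = mA R m a - (Finsupp.lmapDomain R R (List.cons a)) ∘ₗ (DL R m) := by
    apply Finsupp.lhom_ext; intro l r
    cases l with
    | nil => simp [Finsupp.lmapDomain_apply, Finsupp.mapDomain_single, dList, mAf]
    | cons b t =>
        simp only [LinearMap.comp_apply, Finsupp.lmapDomain_apply, Finsupp.mapDomain_single,
          DL_single, LinearMap.sub_apply, mA_single, dList, mAf]
        rw [Finsupp.mapDomain_smul, smul_sub]
  have h2 := LinearMap.congr_fun this y
  simpa [Finsupp.lmapDomain_apply] using h2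

lemma L2 (a b : ℕ) (t : List ℕ) :
    mA R m a (dList R m (b :: t)) = if a + b < m then -dList R m ((a + b) :: t) else 0 := by
  cases t with
  | nil => simp [dList, apply_ite Neg.neg]
  | cons c t' =>
    rw [dList, dList, map_sub, L3, apply_ite (mA R m a), map_neg, mA_single, map_zero]
    simp only [mAf, one_smul]
    split_ifs with h1 h2 h3 h4 h5 <;> first | omega | (rw [← Nat.add_assoc]; abel) | abel


lemma dd : ∀ l : List ℕ, DL R m (dList R m l) = 0
  | [] => by simp [dList]
  | [a] => by simp [dList]
  | a :: b :: t => by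
    rw [dList, map_sub, L1, L2, apply_ite (DL R m), map_neg, DL_single, map_zero,
      dd (b :: t)]
    split_ifs with h <;> simp

lemma mdSub {α β : Type} (f : α → β) (x y : α →₀ R) :
    Finsupp.mapDomain f (x - y) = Finsupp.mapDomain f x - Finsupp.mapDomain f y := by
  simpa [Finsupp.lmapDomain_apply] using map_sub (Finsupp.lmapDomain R R f) x y

lemma mdNeg {α β : Type} (f : α → β) (x : α →₀ R) :
    Finsupp.mapDomain f (-x) = -Finsupp.mapDomain f x := by
  simpa [Finsupp.lmapDomain_apply] using map_neg (Finsupp.lmapDomain R R f) x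

lemma SL_cons1 (y : List ℕ →₀ R) : SL R (Finsupp.mapDomain (List.cons 1) y) = 0 := by
  have : (SL R) ∘ₗ (Finsupp.lmapDomain R R (List.cons 1)) = 0 := by
    apply Finsupp.lhom_ext; intro l r
    simp [Finsupp.lmapDomain_apply, Finsupp.mapDomain_single, sList]
  simpa [Finsupp.lmapDomain_apply] using LinearMap.congr_fun this y

lemma SL_consA (a : ℕ) (ha : 2 ≤ a) (y : List ℕ →₀ R) :
    SL R (Finsupp.mapDomain (List.cons a) y)
      = -(Finsupp.mapDomain (fun l => 1 :: (a - 1) :: l) y) := by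
  have : (SL R) ∘ₗ (Finsupp.lmapDomain R R (List.cons a))
      = -(Finsupp.lmapDomain R R (fun l => 1 :: (a - 1) :: l)) := by
    apply Finsupp.lhom_ext; intro l r
    have : a ≠ 1 := by omega
    simp [Finsupp.lmapDomain_apply, Finsupp.mapDomain_single, sList, this, Finsupp.smul_single]
  simpa [Finsupp.lmapDomain_apply] using LinearMap.congr_fun this y

lemma homot (hm : 2 ≤ m) (a : ℕ) (t : List ℕ) (ha1 : 1 ≤ a) (ha2 : a < m)
    (ht : ∀ x ∈ t, 1 ≤ x ∧ x < m) (hne : 2 ≤ a ∨ t ≠ []) :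
    DL R m (SL R (Finsupp.single (a :: t) 1)) + SL R (DL R m (Finsupp.single (a :: t) 1))
      = Finsupp.single (a :: t) (1:R)
        - (if t ≠ [] ∧ a + t.headI = m then Finsupp.single (1 :: (m - 1) :: t.tail) (1:R)
           else 0) := by
  cases t with
  | nil =>
    have ha : 2 ≤ a := by tauto
    have ha' : a ≠ 1 := by omega
    simp only [SL_single, DL_single, one_smul, sList, dList, ha', if_false, map_neg, DL_single]
    have h1 : 1 + (a - 1) = a := by omega
    simp [dList, h1, ha2]
  | cons b t' =>
    have hb1 : 1 ≤ b := (ht b (by simp)).1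
    have hb2 : b < m := (ht b (by simp)).2
    rcases Nat.lt_or_ge a 2 with ha | ha
    · -- a = 1
      have ha' : a = 1 := by omega
      subst ha'
      simp only [SL_single, DL_single, one_smul, sList, if_pos rfl, map_zero, zero_add, dList]
      rw [map_sub, SL_cons1, apply_ite (SL R), map_neg, SL_single, map_zero, one_smul]
      have hb' : 1 + b ≠ 1 := by omega
      simp only [sList, hb', if_false, sub_zero, neg_neg]
      have : 1 + b - 1 = b := by omega
      rw [this]
      rcases Nat.lt_or_ge (1 + b) m with h | h
      · have : ¬ (1 + b = m) := by omega
        simp [h, this]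
      · have h1 : ¬ (1 + b < m) := by omega
        have h2 : 1 + b = m := by omega
        have h3 : b = m - 1 := by omega
        have h5 : ¬ (1 + (m - 1) < m) := by omega
        have h6 : 1 + (m - 1) = m := by omega
        simp [h1, h2, h3, h5, h6]
    · -- a ≥ 2
      have ha' : a ≠ 1 := by omega
      have hab : a + b ≠ 1 := by omega
      have e1 : 1 + (a - 1) = a := by omega
      have eS : SL R (dList R m (a :: b :: t'))
          = (if a + b < m then Finsupp.single (1 :: (a + b - 1) :: t') (1:R) else 0)
            + Finsupp.mapDomain (fun l => 1 :: (a - 1) :: l) (dList R m (b :: t')) := by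
        rw [dList, map_sub, SL_consA R a ha, apply_ite (SL R), map_neg, SL_single, map_zero]
        simp only [sList, hab, if_false, one_smul, neg_neg, sub_neg_eq_add]
        try (split_ifs <;> abel)
      have eD : DL R m (SL R (Finsupp.single (a :: b :: t') 1))
          = Finsupp.single (a :: b :: t') (1:R)
            + ((if a - 1 + b < m then -Finsupp.single (1 :: (a - 1 + b) :: t') (1:R) else 0)
              - Finsupp.mapDomain (fun l => 1 :: (a - 1) :: l) (dList R m (b :: t'))) := by
        simp only [SL_single, one_smul, sList, ha', if_false, map_neg, DL_single]
        rw [dList, dList, e1]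
        rw [mdSub, ← Finsupp.mapDomain_comp,
          apply_ite (Finsupp.mapDomain (List.cons 1)), mdNeg, Finsupp.mapDomain_single,
          Finsupp.mapDomain_zero]
        simp only [ha2, if_true, Function.comp]
        abel
      rw [eD, DL_single, one_smul, eS]
      rcases Nat.lt_or_ge (a + b) m with h | h
      · have h2 : a - 1 + b < m := by omega
        have h3 : ¬ (a + b = m) := by omega
        have h4 : a + b - 1 = a - 1 + b := by omega
        simp only [h, h2, h3, h4, if_true, if_false, List.headI, List.tail_cons,
          ne_eq, List.cons_ne_nil, not_false_iff, true_and]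
        abel
      · have h1 : ¬ (a + b < m) := by omega
        rcases Nat.lt_or_ge (a - 1 + b) m with h2 | h2
        · have h3 : a + b = m := by omega
          have h4 : a - 1 + b = m - 1 := by omega
          have h5 : m - 1 < m := by omega
          have h6 : ¬ (m < m) := by omega
          simp only [h1, h2, h3, h4, h5, h6, eq_self_iff_true, if_true, if_false, List.headI,
            List.tail_cons, ne_eq, List.cons_ne_nil, not_false_iff, true_and]
          abel
        · have h3 : ¬ (a + b = m) := by omega
          have h4 : ¬ (a - 1 + b < m) := by omega
          simp only [h1, h2, h3, h4, if_false, List.headI, List.tail_cons,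
            ne_eq, List.cons_ne_nil, not_false_iff, true_and]
          abel

lemma chainL (hm : 2 ≤ m) (l : List ℕ) (hl : ∀ x ∈ l, 1 ≤ x) :
    dList R m (1 :: (m - 1) :: l)
      = Finsupp.mapDomain (fun l' => 1 :: (m - 1) :: l') (dList R m l) := by
  have h1 : ¬ (1 + (m - 1) < m) := by omega
  cases l with
  | nil => simp [dList, h1]
  | cons c t =>
    have hc : 1 ≤ c := hl c (by simp)
    have h2 : ¬ (m - 1 + c < m) := by omega
    rw [dList, dList]
    simp only [h1, h2, if_false, zero_sub, mdNeg, neg_neg, ← Finsupp.mapDomain_comp]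
    rfl


lemma dList_support : ∀ (l : List ℕ), (∀ x ∈ l, 1 ≤ x ∧ x < m) →
    ∀ l' ∈ (dList R m l).support,
      l'.length + 1 = l.length ∧ l'.sum = l.sum ∧ ∀ x ∈ l', 1 ≤ x ∧ x < m
  | [], _ => by simp [dList]
  | [a], _ => by simp [dList]
  | a :: b :: t, hl => by
    intro l' hl'
    rw [dList] at hl'
    rcases Finset.mem_union.mp (Finsupp.support_sub hl') with h | h
    · split_ifs at h with hab
      · rw [Finsupp.support_neg] at h
        have := Finsupp.support_single_subset h
        simp only [Finset.mem_singleton] at this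
        subst this
        refine ⟨by simp, by simp [Nat.add_assoc], ?_⟩
        intro x hx
        rcases List.mem_cons.mp hx with rfl | hx
        · have := hl a (by simp)
          have := hl b (by simp)
          omega
        · exact hl x (by simp [hx])
      · simp at h
    · obtain ⟨l'', hmem, rfl⟩ := Finset.mem_image.mp (Finsupp.mapDomain_support h)
      obtain ⟨hL, hS, hV⟩ := dList_support (b :: t) (fun x hx => hl x (by simp [hx])) l'' hmem
      refine ⟨by simpa using hL, by simp [hS], ?_⟩
      intro x hx
      rcases List.mem_cons.mp hx with rfl | hx
      · exact hl x (by simp)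
      · exact hV x hx

variable (ℓ : ℤ) (k : ℕ)

/-- The condition for a list to be a basis element of `OP_k(ℓ,m)`. -/
def GoodL (l : List ℕ) : Prop :=
  l.length = k ∧ (l.sum : ℤ) = ℓ ∧ ∀ x ∈ l, 1 ≤ x ∧ x < m

lemma goodL_iff (l : List ℕ) : GoodL m ℓ k l ↔
    (l.length = k ∧ (l.sum : ℤ) = ℓ ∧ ∀ x ∈ l, 1 ≤ x ∧ x < m) := Iff.rfl

lemma eL_single (b : OPb ℓ m k) (r : R) :
    eL R ℓ m k (Finsupp.single b r) = Finsupp.single b.1 r :=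
  Finsupp.mapDomain_single

lemma rL_apply (y : List ℕ →₀ R) (b : OPb ℓ m k) : rL R ℓ m k y b = y b.1 := rfl

lemma rL_single_of (l : List ℕ) (h : GoodL m ℓ k l) (r : R) :
    rL R ℓ m k (Finsupp.single l r) = Finsupp.single (⟨l, h⟩ : OPb ℓ m k) r := by
  ext b
  erw [rL_apply, Finsupp.single_apply, Finsupp.single_apply]
  by_cases hb : b = (⟨l, h⟩ : OPb ℓ m k)
  · subst hb; simp
    exact fun hne => absurd rfl hne
  · have h1 : l ≠ b.1 := fun e => hb (Subtype.ext e.symm)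
    have h2 : ¬ ((⟨l, h⟩ : OPb ℓ m k) = b) := fun e => hb e.symm
    simp [h1, h2]
    exact fun e => absurd e h2

lemma rL_single_zero (l : List ℕ) (h : ¬ GoodL m ℓ k l) (r : R) :
    rL R ℓ m k (Finsupp.single l r) = 0 := by
  ext b
  rw [rL_apply, Finsupp.single_apply]
  have : l ≠ b.1 := fun e => h (e ▸ b.2)
  simp [this]

lemma rL_eL (x : OPMod R ℓ m k) : rL R ℓ m k (eL R ℓ m k x) = x := by
  ext b
  rw [rL_apply]
  exact Finsupp.mapDomain_apply Subtype.val_injective x b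

lemma eL_rL_supported (y : List ℕ →₀ R) (hy : ∀ l ∈ y.support, GoodL m ℓ k l) :
    eL R ℓ m k (rL R ℓ m k y) = y := by
  ext l
  by_cases h : GoodL m ℓ k l
  · have e1 : l = (⟨l, h⟩ : OPb ℓ m k).1 := rfl
    erw [e1, eL, Finsupp.lmapDomain_apply, Finsupp.mapDomain_apply Subtype.val_injective]
    exact rL_apply R m ℓ k y _
  · have h1 : l ∉ Set.range (Subtype.val : OPb ℓ m k → List ℕ) := by
      rintro ⟨b, rfl⟩; exact h b.2
    erw [eL, Finsupp.lmapDomain_apply, Finsupp.mapDomain_notin_range _ _ h1]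
    by_contra hne
    exact h (hy l (Finsupp.mem_support_iff.mpr fun e => hne e.symm))

lemma supp_DL_eL (x : OPMod R ℓ m (k + 1)) :
    ∀ l ∈ (DL R m (eL R ℓ m (k + 1) x)).support, GoodL m ℓ k l := by
  induction x using Finsupp.induction_linear with
  | zero => simp
  | add f g hf hg =>
    intro l hl
    rw [map_add, map_add] at hl
    rcases Finset.mem_union.mp (Finsupp.support_add hl) with h | h
    exacts [hf l h, hg l h]
  | single b r =>
    intro l hl
    rw [eL_single, DL_single] at hl
    have hl' : l ∈ (dList R m b.1).support := Finsupp.support_smul hl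
    obtain ⟨hL, hS, hV⟩ := dList_support R m b.1 b.2.2.2 l hl'
    have h2 := b.2
    refine ⟨?_, ?_, hV⟩
    · have := h2.1
      omega
    · rw [hS]
      exact h2.2.1

lemma supp_SL_eL (x : OPMod R ℓ m (k + 1)) :
    ∀ l ∈ (SL R (eL R ℓ m (k + 1) x)).support, GoodL m ℓ (k + 2) l := by
  induction x using Finsupp.induction_linear with
  | zero => simp
  | add f g hf hg =>
    intro l hl
    rw [map_add, map_add] at hl
    rcases Finset.mem_union.mp (Finsupp.support_add hl) with h | h
    exacts [hf l h, hg l h]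
  | single b r =>
    intro l hl
    rw [eL_single, SL_single] at hl
    have hl' : l ∈ (sList R b.1).support := Finsupp.support_smul hl
    obtain ⟨hlen, hsum, hval⟩ := b.2
    match hb : b.1, hlen with
    | a :: t, hlen =>
      rw [hb] at hl' hsum hval
      by_cases ha : a = 1
      · rw [sList, if_pos ha] at hl'
        simp at hl'
      · rw [sList, if_neg ha, Finsupp.support_neg] at hl'
        have := Finsupp.support_single_subset hl'
        simp only [Finset.mem_singleton] at this
        subst this
        have ha1 : 1 ≤ a := (hval a (by simp)).1
        have ha2 : a < m := (hval a (by simp)).2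
        refine ⟨by simp at hlen ⊢; omega, ?_, ?_⟩
        · simp only [List.sum_cons] at hsum ⊢
          push_cast at hsum ⊢
          omega
        · intro x hx
          rcases List.mem_cons.mp hx with rfl | hx
          · omega
          · rcases List.mem_cons.mp hx with rfl | hx
            · omega
            · exact hval x (by simp [hx])

lemma eL_dOP (x : OPMod R ℓ m (k + 1)) :
    eL R ℓ m k (dOP R ℓ m k x) = DL R m (eL R ℓ m (k + 1) x) := by
  rw [dOP]
  simp only [LinearMap.comp_apply]
  exact eL_rL_supported R m ℓ k _ (supp_DL_eL R m ℓ k x)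

/-- The contracting homotopy. -/
noncomputable def sAll : ∀ j, OPMod R ℓ m j →ₗ[R] OPMod R ℓ m (j + 1)
  | 0 => 0
  | (j + 1) => rL R ℓ m (j + 2) ∘ₗ SL R ∘ₗ eL R ℓ m (j + 1)

lemma eL_sAll (x : OPMod R ℓ m (k + 1)) :
    eL R ℓ m (k + 2) (sAll R m ℓ (k + 1) x) = SL R (eL R ℓ m (k + 1) x) := by
  rw [sAll]
  simp only [LinearMap.comp_apply]
  exact eL_rL_supported R m ℓ (k + 2) _ (supp_SL_eL R m ℓ k x)

lemma DLDL (y : List ℕ →₀ R) : DL R m (DL R m y) = 0 := by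
  induction y using Finsupp.induction_linear with
  | zero => simp
  | add f g hf hg => rw [map_add, map_add, hf, hg, add_zero]
  | single l r => rw [DL_single, map_smul, dd, smul_zero]

lemma dOP_dOP (x : OPMod R ℓ m (k + 2)) :
    dOP R ℓ m k (dOP R ℓ m (k + 1) x) = 0 := by
  conv_lhs => rw [dOP]
  simp only [LinearMap.comp_apply]
  rw [eL_dOP, DLDL]
  simp

lemma mapF_eq (y : List ℕ →₀ R) :
    Finsupp.mapDomain (fun l => 1 :: (m - 1) :: l) y
      = Finsupp.mapDomain (List.cons 1) (Finsupp.mapDomain (List.cons (m - 1)) y) := by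
  rw [← Finsupp.mapDomain_comp]
  rfl

lemma phi_eL (hm : 2 ≤ m) (w : OPMod R (ℓ - m) m k) :
    eL R ℓ m (k + 2) (phiOP R ℓ m hm k w)
      = Finsupp.mapDomain (fun l => 1 :: (m - 1) :: l) (eL R (ℓ - m) m k w) := by
  induction w using Finsupp.induction_linear with
  | zero => simp
  | add f g hf hg => rw [map_add, map_add, hf, hg, map_add, Finsupp.mapDomain_add]
  | single b r =>
    erw [eL_single, phiOP, Finsupp.lmapDomain_apply, Finsupp.mapDomain_single,
      Finsupp.lmapDomain_apply, Finsupp.mapDomain_single, Finsupp.mapDomain_single]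

lemma goodF (hm : 2 ≤ m) (l : List ℕ) :
    GoodL m ℓ (k + 2) (1 :: (m - 1) :: l) ↔ GoodL m (ℓ - m) k l := by
  unfold GoodL
  constructor
  · rintro ⟨h1, h2, h3⟩
    refine ⟨by simpa using h1, ?_, fun x hx => h3 x (by simp [hx])⟩
    simp only [List.sum_cons, Nat.cast_add] at h2 ⊢
    omega
  · rintro ⟨h1, h2, h3⟩
    refine ⟨by simpa using h1, ?_, ?_⟩
    · simp only [List.sum_cons, Nat.cast_add] at h2 ⊢
      omega
    · intro x hx
      rcases List.mem_cons.mp hx with rfl | hx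
      · omega
      · rcases List.mem_cons.mp hx with rfl | hx
        · omega
        · exact h3 x hx

lemma phi_single (hm : 2 ≤ m) (b : OPb (ℓ - m) m k) (r : R) :
    phiOP R ℓ m hm k (Finsupp.single b r)
      = Finsupp.single (⟨1 :: (m - 1) :: b.1, (goodF m ℓ k hm b.1).mpr b.2⟩ :
          OPb ℓ m (k + 2)) r := by
  erw [phiOP, Finsupp.lmapDomain_apply, Finsupp.mapDomain_single]
  rfl

lemma phi_rL (hm : 2 ≤ m) (y : List ℕ →₀ R) :
    phiOP R ℓ m hm k (rL R (ℓ - m) m k y)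
      = rL R ℓ m (k + 2) (Finsupp.mapDomain (fun l => 1 :: (m - 1) :: l) y) := by
  induction y using Finsupp.induction_linear with
  | zero => simp
  | add f g hf hg => rw [map_add, map_add, hf, hg, Finsupp.mapDomain_add, map_add]
  | single l r =>
    rw [Finsupp.mapDomain_single]
    by_cases h : GoodL m (ℓ - m) k l
    · erw [rL_single_of R m (ℓ - m) k l h, phi_single,
        rL_single_of R m ℓ (k + 2) _ ((goodF m ℓ k hm l).mpr h)]
    · rw [rL_single_zero R m (ℓ - m) k l h, map_zero,
        rL_single_zero R m ℓ (k + 2) _ (fun hh => h ((goodF m ℓ k hm l).mp hh))]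

lemma DL_mapF (hm : 2 ≤ m) (ℓ' : ℤ) (x : OPMod R ℓ' m k) :
    DL R m (Finsupp.mapDomain (fun l => 1 :: (m - 1) :: l) (eL R ℓ' m k x))
      = Finsupp.mapDomain (fun l => 1 :: (m - 1) :: l) (DL R m (eL R ℓ' m k x)) := by
  induction x using Finsupp.induction_linear with
  | zero => simp
  | add f g hf hg => simp only [map_add, Finsupp.mapDomain_add, hf, hg]
  | single b r =>
    rw [eL_single, Finsupp.mapDomain_single, DL_single, DL_single, Finsupp.mapDomain_smul]
    rw [← chainL R m hm b.1 (fun x hx => (b.2.2.2 x hx).1)]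

lemma chainOP (hm : 2 ≤ m) (w : OPMod R (ℓ - m) m (k + 1)) :
    dOP R ℓ m (k + 2) (phiOP R ℓ m hm (k + 1) w)
      = phiOP R ℓ m hm k (dOP R (ℓ - m) m k w) := by
  conv_lhs => rw [dOP]
  simp only [LinearMap.comp_apply]
  rw [phi_eL R m ℓ (k + 1) hm, DL_mapF R m (k + 1) hm (ℓ - (m : ℤ)) w, ← phi_rL R m ℓ k hm]
  rw [dOP]
  simp only [LinearMap.comp_apply]

lemma phiOP_inj (hm : 2 ≤ m) : Function.Injective (phiOP R ℓ m hm k) := by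
  apply Finsupp.mapDomain_injective
  intro b b' h
  apply Subtype.ext
  have := Subtype.ext_iff.mp h
  simpa using this

lemma sAll_phi (hm : 2 ≤ m) (w : OPMod R (ℓ - m) m k) :
    sAll R m ℓ (k + 2) (phiOP R ℓ m hm k w) = 0 := by
  rw [sAll]
  simp only [LinearMap.comp_apply]
  rw [phi_eL, mapF_eq, SL_cons1, map_zero]

lemma Phi_eq (hm : 2 ≤ m) : Phi R ℓ m hm (k + 2) = LinearMap.range (phiOP R ℓ m hm k) := rfl

lemma op0_empty (hℓ : 2 ≤ ℓ) : IsEmpty (OPb ℓ m 0) := by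
  constructor
  rintro ⟨l, h1, h2, h3⟩
  have : l = [] := List.length_eq_zero_iff.mp h1
  subst this
  simp at h2
  omega

lemma op0_zero (hℓ : 2 ≤ ℓ) (c : OPMod R ℓ m 0) : c = 0 := by
  haveI := op0_empty m ℓ hℓ
  exact Finsupp.ext fun b => isEmptyElim b

lemma homot_core (hm : 2 ≤ m) (hℓ : 2 ≤ ℓ) (b : OPb ℓ m (k + 1)) :
    dOP R ℓ m (k + 1) (sAll R m ℓ (k + 1) (Finsupp.single b 1))
      + sAll R m ℓ k (dOP R ℓ m k (Finsupp.single b 1)) - Finsupp.single b 1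
      ∈ Phi R ℓ m hm (k + 1) := by
  obtain ⟨a, t, hb⟩ : ∃ a t, b.1 = a :: t := by
    have := b.2.1
    cases hbb : b.1 with
    | nil => rw [hbb] at this; simp at this
    | cons a t => exact ⟨a, t, rfl⟩
  have hval := b.2.2.2
  have hsum := b.2.2.1
  have hlen := b.2.1
  rw [hb] at hval hsum hlen
  have ha1 : 1 ≤ a := (hval a (by simp)).1
  have ha2 : a < m := (hval a (by simp)).2
  have ht : ∀ x ∈ t, 1 ≤ x ∧ x < m := fun x hx => hval x (by simp [hx])
  have hor : 2 ≤ a ∨ t ≠ [] := by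
    by_contra h
    push_neg at h
    obtain ⟨h1, h2⟩ := h
    subst h2
    simp at hsum
    omega
  have e1 : dOP R ℓ m (k + 1) (sAll R m ℓ (k + 1) (Finsupp.single b 1))
      = rL R ℓ m (k + 1) (DL R m (SL R (eL R ℓ m (k + 1) (Finsupp.single b 1)))) := by
    conv_lhs => rw [dOP]
    simp only [LinearMap.comp_apply]
    rw [eL_sAll]
  have e2 : sAll R m ℓ k (dOP R ℓ m k (Finsupp.single b 1))
      = rL R ℓ m (k + 1) (SL R (DL R m (eL R ℓ m (k + 1) (Finsupp.single b 1)))) := by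
    cases k with
    | zero =>
      have ht0 : t = [] := by simpa using hlen
      subst ht0
      rw [eL_single, hb]
      show 0 = rL R ℓ m 1 (SL R (DL R m (Finsupp.single [a] 1)))
      rw [DL_single]
      show (0 : OPMod R ℓ m 1) = rL R ℓ m 1 (SL R ((1:R) • dList R m [a]))
      rw [dList]
      simp
    | succ j =>
      rw [sAll]
      simp only [LinearMap.comp_apply]
      rw [eL_dOP]
  have key := homot R m hm a t ha1 ha2 ht hor
  have ebl : Finsupp.single (a :: t) (1 : R) = Finsupp.single b.1 1 := by rw [hb]
  have erb : rL R ℓ m (k + 1) (Finsupp.single b.1 (1 : R)) = Finsupp.single b 1 := by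
    erw [rL_single_of R m ℓ (k + 1) b.1 b.2, Subtype.coe_eta]
    rfl
  have emain : dOP R ℓ m (k + 1) (sAll R m ℓ (k + 1) (Finsupp.single b 1))
      + sAll R m ℓ k (dOP R ℓ m k (Finsupp.single b 1)) - Finsupp.single b 1
      = -(rL R ℓ m (k + 1)
          (if t ≠ [] ∧ a + t.headI = m then Finsupp.single (1 :: (m - 1) :: t.tail) (1:R)
           else 0)) := by
    rw [e1, e2, ← map_add, eL_single, hb, key, map_sub, ebl, erb]
    abel
  rw [emain]
  by_cases hcond : t ≠ [] ∧ a + t.headI = m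
  · rw [if_pos hcond]
    obtain ⟨hne, hhead⟩ := hcond
    obtain ⟨h', t'', rfl⟩ : ∃ h' t'', t = h' :: t'' := by
      cases t with
      | nil => exact absurd rfl hne
      | cons h' t'' => exact ⟨h', t'', rfl⟩
    simp only [List.headI] at hhead
    simp only [List.tail_cons]
    cases k with
    | zero => simp at hlen
    | succ j =>
      have hgw : GoodL m (ℓ - m) j t'' := by
        refine ⟨by simp at hlen; omega, ?_, fun x hx => ht x (by simp [hx])⟩
        simp only [List.sum_cons, Nat.cast_add] at hsum ⊢
        have : ((a : ℤ) + (h' : ℤ)) = (m : ℤ) := by exact_mod_cast congrArg (Nat.cast : ℕ → ℤ) hhead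
        omega
      have hg2 : GoodL m ℓ (j + 2) (1 :: (m - 1) :: t'') := (goodF m ℓ j hm t'').mpr hgw
      rw [rL_single_of R m ℓ (j + 2) _ hg2]
      rw [Phi_eq]
      refine Submodule.neg_mem _ ⟨Finsupp.single (⟨t'', hgw⟩ : OPb (ℓ - m) m j) 1, ?_⟩
      erw [phi_single]
  · rw [if_neg hcond]
    simp only [map_zero, neg_zero]
    exact Submodule.zero_mem _

lemma homot_OP (hm : 2 ≤ m) (hℓ : 2 ≤ ℓ) (c : OPMod R ℓ m (k + 1)) :
    dOP R ℓ m (k + 1) (sAll R m ℓ (k + 1) c) + sAll R m ℓ k (dOP R ℓ m k c) - c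
      ∈ Phi R ℓ m hm (k + 1) := by
  induction c using Finsupp.induction_linear with
  | zero => simpa using Submodule.zero_mem _
  | add f g hf hg =>
    have e : dOP R ℓ m (k + 1) (sAll R m ℓ (k + 1) (f + g))
        + sAll R m ℓ k (dOP R ℓ m k (f + g)) - (f + g)
      = (dOP R ℓ m (k + 1) (sAll R m ℓ (k + 1) f) + sAll R m ℓ k (dOP R ℓ m k f) - f)
        + (dOP R ℓ m (k + 1) (sAll R m ℓ (k + 1) g) + sAll R m ℓ k (dOP R ℓ m k g) - g) := by
      simp only [map_add]
      abel
    rw [e]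
    exact Submodule.add_mem _ hf hg
  | single b r =>
    have hr : Finsupp.single b r = r • Finsupp.single b (1 : R) := by
      rw [Finsupp.smul_single, smul_eq_mul, mul_one]
    have e : dOP R ℓ m (k + 1) (sAll R m ℓ (k + 1) (Finsupp.single b r))
        + sAll R m ℓ k (dOP R ℓ m k (Finsupp.single b r)) - Finsupp.single b r
      = r • (dOP R ℓ m (k + 1) (sAll R m ℓ (k + 1) (Finsupp.single b 1))
          + sAll R m ℓ k (dOP R ℓ m k (Finsupp.single b 1)) - Finsupp.single b 1) := by
      rw [hr]
      simp only [map_smul, smul_sub, smul_add]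
    rw [e]
    exact Submodule.smul_mem _ r (homot_core R m ℓ k hm hℓ b)

lemma sAll_zero_apply (x : OPMod R ℓ m 0) : sAll R m ℓ 0 x = 0 := rfl

lemma sAll_Phi_zero (hm : 2 ≤ m) : ∀ j (x : OPMod R ℓ m j),
    x ∈ Phi R ℓ m hm j → sAll R m ℓ j x = 0
  | 0, x, _ => rfl
  | 1, x, hx => by
    have : x = 0 := by simpa [Phi] using hx
    rw [this, map_zero]
  | (j + 2), x, hx => by
    obtain ⟨w, rfl⟩ := hx
    exact sAll_phi R m ℓ j hm w

end Aux

/-- for `m ≥ 2`, `ℓ ≥ 2`, on the quotient `C_* = OP_*(ℓ,m)/im φ` the map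
`s(a₁,...,a_k) = 0` if `a₁ = 1` and `-(1, a₁-1, a₂, ..., a_k)` if `a₁ > 1` satisfies
`sd + ds = Id`; hence `C_*` is acyclic and `φ` is a quasi-isomorphism. -/
theorem quotient_contractible (R : Type) [CommRing R] (ℓ : ℤ) (m : ℕ)
    (hm : 2 ≤ m) (hℓ : 2 ≤ ℓ) :
    (∃ s : ∀ k, OPMod R ℓ m k →ₗ[R] OPMod R ℓ m (k + 1),
      -- `s` is given on basis elements by the stated formula (a lift of the map on `C_*`):
      (∀ k (b : OPb ℓ m (k + 1)) (a : ℕ) (t : List ℕ), b.1 = a :: t →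
        (a = 1 → s (k + 1) (Finsupp.single b 1) = 0) ∧
        (1 < a → ∃ b' : OPb ℓ m (k + 2), b'.1 = 1 :: (a - 1) :: t ∧
          s (k + 1) (Finsupp.single b 1) = -Finsupp.single b' 1)) ∧
      -- `s d + d s = Id` holds in the quotient `C_*`, i.e. modulo the image of `φ`:
      (∀ c : OPMod R ℓ m 0, dOP R ℓ m 0 (s 0 c) - c ∈ Phi R ℓ m hm 0) ∧
      (∀ k (c : OPMod R ℓ m (k + 1)),
        dOP R ℓ m (k + 1) (s (k + 1) c) + s k (dOP R ℓ m k c) - c ∈ Phi R ℓ m hm (k + 1))) ∧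
    -- hence `C_*` is acyclic: every relative cycle is a relative boundary:
    (∀ c : OPMod R ℓ m 0, ∃ c' : OPMod R ℓ m 1, c - dOP R ℓ m 0 c' ∈ Phi R ℓ m hm 0) ∧
    (∀ k (c : OPMod R ℓ m (k + 1)), dOP R ℓ m k c ∈ Phi R ℓ m hm k →
      ∃ c' : OPMod R ℓ m (k + 2), c - dOP R ℓ m (k + 1) c' ∈ Phi R ℓ m hm (k + 1)) ∧
    -- and `φ` is a quasi-isomorphism: it induces a bijection on homology
    -- (surjectivity, injectivity, and vanishing of `H_0` and `H_1` of `OP_*(ℓ,m)`):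
    (∀ k (z : OPMod R ℓ m (k + 2)), dOPOut R ℓ m (k + 2) z = 0 →
      ∃ (w : OPMod R (ℓ - m) m k) (u : OPMod R ℓ m (k + 3)),
        dOPOut R (ℓ - m) m k w = 0 ∧ z = phiOP R ℓ m hm k w + dOP R ℓ m (k + 2) u) ∧
    (∀ k (w : OPMod R (ℓ - m) m k), dOPOut R (ℓ - m) m k w = 0 →
      (∃ u : OPMod R ℓ m (k + 3), phiOP R ℓ m hm k w = dOP R ℓ m (k + 2) u) →
      ∃ v : OPMod R (ℓ - m) m (k + 1), w = dOP R (ℓ - m) m k v) ∧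
    (∀ z : OPMod R ℓ m 1, dOPOut R ℓ m 1 z = 0 → ∃ u : OPMod R ℓ m 2, z = dOP R ℓ m 1 u) ∧
    (∀ z : OPMod R ℓ m 0, ∃ u : OPMod R ℓ m 1, z = dOP R ℓ m 0 u) := by
  classical
  have hzero : ∀ c : OPMod R ℓ m 0, c = 0 := op0_zero R m ℓ hℓ
  refine ⟨⟨sAll R m ℓ, ?_, ?_, ?_⟩, ?_, ?_, ?_, ?_, ?_, ?_⟩
  · -- the formula for s on basis elements
    intro k b a t hb
    constructor
    · intro ha
      rw [sAll]
      simp only [LinearMap.comp_apply]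
      rw [eL_single, hb, SL_single, one_smul, sList, if_pos ha, map_zero]
    · intro ha
      have hval := b.2.2.2
      have hsum := b.2.2.1
      have hlen := b.2.1
      rw [hb] at hval hsum hlen
      have ha2 : a < m := (hval a (by simp)).2
      have hgood : GoodL m ℓ (k + 2) (1 :: (a - 1) :: t) := by
        refine ⟨by simpa using hlen, ?_, ?_⟩
        · simp only [List.sum_cons, Nat.cast_add] at hsum ⊢
          omega
        · intro x hx
          rcases List.mem_cons.mp hx with rfl | hx
          · omega
          · rcases List.mem_cons.mp hx with rfl | hx
            · omega
            · exact hval x (by simp [hx])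
      refine ⟨⟨1 :: (a - 1) :: t, hgood⟩, rfl, ?_⟩
      rw [sAll]
      simp only [LinearMap.comp_apply]
      have ha' : a ≠ 1 := by omega
      rw [eL_single, hb, SL_single, one_smul, sList, if_neg ha', map_neg,
        rL_single_of R m ℓ (k + 2) _ hgood]
      rfl
  · -- degree 0 part of the homotopy identity
    intro c
    rw [hzero c, hzero (dOP R ℓ m 0 (sAll R m ℓ 0 0))]
    simpa using Submodule.zero_mem _
  · -- the homotopy identity
    intro k c
    exact homot_OP R m ℓ k hm hℓ c
  · -- acyclicity in degree 0
    intro c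
    refine ⟨0, ?_⟩
    rw [hzero c, map_zero, sub_zero]
    exact Submodule.zero_mem _
  · -- acyclicity in higher degrees
    intro k c hc
    refine ⟨sAll R m ℓ (k + 1) c, ?_⟩
    have hX := homot_OP R m ℓ k hm hℓ c
    have hs0 : sAll R m ℓ k (dOP R ℓ m k c) = 0 := sAll_Phi_zero R m ℓ hm k _ hc
    have e : c - dOP R ℓ m (k + 1) (sAll R m ℓ (k + 1) c)
        = -(dOP R ℓ m (k + 1) (sAll R m ℓ (k + 1) c) + sAll R m ℓ k (dOP R ℓ m k c) - c)
          + sAll R m ℓ k (dOP R ℓ m k c) := by abel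
    rw [e]
    refine Submodule.add_mem _ (Submodule.neg_mem _ hX) ?_
    rw [hs0]
    exact Submodule.zero_mem _
  · -- φ is surjective on homology
    intro k z hz
    have hz' : dOP R ℓ m (k + 1) z = 0 := hz
    have hH := homot_OP R m ℓ (k + 1) hm hℓ z
    rw [hz', map_zero, add_zero, Phi_eq] at hH
    obtain ⟨w0, hw0⟩ := hH
    have hw0' : phiOP R ℓ m hm k w0
        = dOP R ℓ m (k + 2) (sAll R m ℓ (k + 2) z) - z := hw0
    refine ⟨-w0, sAll R m ℓ (k + 2) z, ?_, ?_⟩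
    · cases k with
      | zero => rfl
      | succ j =>
        show dOP R (ℓ - m) m j (-w0) = 0
        apply (phiOP_inj R m ℓ j hm)
        have step : phiOP R ℓ m hm j (dOP R (ℓ - m) m j w0) = 0 := by
          rw [← chainOP R m ℓ j hm w0]
          have hw0'' : phiOP R ℓ m hm (j + 1) w0
              = dOP R ℓ m (j + 2 + 1) (sAll R m ℓ (j + 2 + 1) z) - z := hw0
          have hz'' : dOP R ℓ m (j + 2) z = 0 := hz'
          rw [hw0'', map_sub, dOP_dOP, hz'', sub_zero]
        rw [map_neg, map_neg, map_zero, step, neg_zero]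
    · rw [map_neg, hw0']
      abel
  · -- φ is injective on homology
    intro k w hw hu
    obtain ⟨u, hu⟩ := hu
    have hH := homot_OP R m ℓ (k + 2) hm hℓ u
    rw [← hu, sAll_phi R m ℓ k hm w, add_zero, Phi_eq] at hH
    obtain ⟨v0, hv0⟩ := hH
    have hv0' : phiOP R ℓ m hm (k + 1) v0
        = dOP R ℓ m (k + 2 + 1) (sAll R m ℓ (k + 2 + 1) u) - u := hv0
    refine ⟨-v0, ?_⟩
    apply (phiOP_inj R m ℓ k hm)
    have step : phiOP R ℓ m hm k (dOP R (ℓ - m) m k v0) = -(phiOP R ℓ m hm k w) := by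
      rw [← chainOP R m ℓ k hm v0, hv0', map_sub, dOP_dOP, hu, zero_sub]
    rw [map_neg, map_neg, step, neg_neg]
  · -- H₁ vanishes
    intro z hz
    refine ⟨sAll R m ℓ 1 z, ?_⟩
    have hH := homot_OP R m ℓ 0 hm hℓ z
    rw [sAll_zero_apply, add_zero] at hH
    have h0 : dOP R ℓ m 1 (sAll R m ℓ 1 z) - z ∈ (⊥ : Submodule R (OPMod R ℓ m 1)) := hH
    exact (sub_eq_zero.mp ((Submodule.mem_bot R).mp h0)).symm
  · -- H₀ vanishes
    intro z
    exact ⟨0, by rw [hzero z, map_zero]⟩
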